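/- Let A_1, A_2 be symmetric n×n real matrices with rank([A_1,A_2]) = 2, and let {v,w} be a basis of the image of [A_1,A_2]. If A_1, A_2 admit (n+1)×(n+1) symmetric commuting extensions, then the six vectors v, w, A_1 v, A_1 w, A_2 v, A_2 w are linearly dependent. -/
import Mathlib


/-- Lemma 1: if symmetric A₁, A₂ with rank [A₁,A₂] = 2 admit
(n+1)×(n+1) symmetric commuting extensions, and {v,w} is a basis of Im [A₁,A₂],
then v, w, A₁v, A₁w, A₂v, A₂w are linearly dependent. -/
theorem six_vectors_linearly_dependent (n : ℕ)
    (A₁ A₂ : Matrix (Fin n) (Fin n) ℝ)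
    (h₁ : A₁.IsSymm) (h₂ : A₂.IsSymm)
    (hrank : (A₁ * A₂ - A₂ * A₁).rank = 2)
    (v w : Fin n → ℝ)
    (hvw : LinearIndependent ℝ ![v, w])
    (hbasis : Submodule.span ℝ {v, w}
      = LinearMap.range (Matrix.toLin' (A₁ * A₂ - A₂ * A₁)))
    (hexist : ∃ (c₁ c₂ : Fin n → ℝ) (γ₁ γ₂ : ℝ),
      A₁ * A₂ - A₂ * A₁ + Matrix.vecMulVec c₁ c₂ - Matrix.vecMulVec c₂ c₁ = 0 ∧
      A₁.mulVec c₂ + γ₂ • c₁ - A₂.mulVec c₁ - γ₁ • c₂ = 0) :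
    ¬ LinearIndependent ℝ
      ![v, w, A₁.mulVec v, A₁.mulVec w, A₂.mulVec v, A₂.mulVec w] := by
  intro hLI
  obtain ⟨c₁, c₂, γ₁, γ₂, heq1, heq2⟩ := hexist
  set M : Matrix (Fin n) (Fin n) ℝ := A₁ * A₂ - A₂ * A₁ with hM
  have hMeq : M = Matrix.vecMulVec c₂ c₁ - Matrix.vecMulVec c₁ c₂ := by
    have h := sub_eq_zero.mp heq1
    exact eq_sub_of_add_eq h
  -- mulVec formula
  have hmv : ∀ x : Fin n → ℝ, M.mulVec x = (dotProduct c₁ x) • c₂ - (dotProduct c₂ x) • c₁ := by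
    intro x
    rw [hMeq, Matrix.sub_mulVec]
    funext i
    simp [Matrix.mulVec, Matrix.vecMulVec_apply, dotProduct, Finset.mul_sum,
      Finset.sum_mul, mul_assoc, mul_comm, mul_left_comm]
  classical
  -- span {v,w} ≤ span {c₁,c₂}
  have hle : Submodule.span ℝ ({v, w} : Set (Fin n → ℝ)) ≤ Submodule.span ℝ ({c₁, c₂} : Set (Fin n → ℝ)) := by
    rw [hbasis]
    rintro x ⟨y, rfl⟩
    rw [Matrix.toLin'_apply, hmv]
    exact sub_mem
      (Submodule.smul_mem _ _ (Submodule.subset_span (by simp)))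
      (Submodule.smul_mem _ _ (Submodule.subset_span (by simp)))
  have hfr : Module.finrank ℝ (Submodule.span ℝ ({v, w} : Set (Fin n → ℝ))) = 2 := by
    rw [hbasis, Matrix.toLin'_apply']
    exact hrank
  have hfr2 : Module.finrank ℝ (Submodule.span ℝ ({c₁, c₂} : Set (Fin n → ℝ))) ≤ 2 := by
    refine (finrank_span_le_card _).trans ?_
    have ht : ({c₁, c₂} : Set (Fin n → ℝ)).toFinset = {c₁, c₂} := by simp
    rw [ht]
    exact (Finset.card_insert_le _ _).trans (by simp)
  have hspan_eq : Submodule.span ℝ ({v, w} : Set (Fin n → ℝ)) = Submodule.span ℝ ({c₁, c₂} : Set (Fin n → ℝ)) :=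
    Submodule.eq_of_le_of_finrank_le hle (by omega)
  have hc1 : c₁ ∈ Submodule.span ℝ ({v, w} : Set (Fin n → ℝ)) := by
    rw [hspan_eq]; exact Submodule.subset_span (by simp)
  have hc2 : c₂ ∈ Submodule.span ℝ ({v, w} : Set (Fin n → ℝ)) := by
    rw [hspan_eq]; exact Submodule.subset_span (by simp)
  obtain ⟨r, s, hrs⟩ := Submodule.mem_span_pair.mp hc1
  obtain ⟨p, q, hpq⟩ := Submodule.mem_span_pair.mp hc2
  -- the explicit dependence
  have key := Fintype.linearIndependent_iff.mp hLI
    ![γ₂*r - γ₁*p, γ₂*s - γ₁*q, p, q, -r, -s]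
  have hsum : ∑ i, ![γ₂*r - γ₁*p, γ₂*s - γ₁*q, p, q, -r, -s] i •
      ![v, w, A₁.mulVec v, A₁.mulVec w, A₂.mulVec v, A₂.mulVec w] i = 0 := by
    rw [← hrs, ← hpq] at heq2
    rw [Matrix.mulVec_add, Matrix.mulVec_smul, Matrix.mulVec_smul,
        Matrix.mulVec_add, Matrix.mulVec_smul, Matrix.mulVec_smul] at heq2
    simp only [Fin.sum_univ_six]
    show (γ₂*r - γ₁*p) • v + (γ₂*s - γ₁*q) • w + p • A₁.mulVec v + q • A₁.mulVec w +
        (-r) • A₂.mulVec v + (-s) • A₂.mulVec w = 0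
    linear_combination (norm := module) heq2
  have hall := key hsum
  have hp : p = 0 := hall 2
  have hq : q = 0 := hall 3
  have hr : r = 0 := neg_eq_zero.mp (hall 4)
  have hs : s = 0 := neg_eq_zero.mp (hall 5)
  have hc10 : c₁ = 0 := by rw [← hrs, hr, hs]; simp
  have hc20 : c₂ = 0 := by rw [← hpq, hp, hq]; simp
  rw [hc10, hc20] at hMeq
  simp at hMeq
  rw [hMeq] at hrank
  simp [Matrix.rank_zero] at hrank
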